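/- Let T be a finite rooted tree and let a, b be reals with 0 < a ≤ b. Then there exist a positive integer n and an injective map φ from the vertex set of T into ℝⁿ such that: (i) whenever u ≠ v are siblings in T (distinct vertices with the same parent), the distance from φ(u) to φ(v) equals a; (ii) whenever u is a proper ancestor of v in T, the distance from φ(u) to φ(v) equals b; and (iii) the image φ(V(T)) is an affinely independent set of points. -/

import Mathlib

/-- **Construction `D(T,a,b)`.** Let `T` be a finite rooted tree (given by a finite
vertex type `V`, a root, and a parent map under which every vertex reaches the root)
and let `0 < a ≤ b`. Then there is an injective map `φ : V → ℝⁿ` such that siblings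
are mapped to points at distance `a`, every vertex is at distance `b` from each of
its proper ancestors, and the image is affinely independent (a simplex). -/
theorem exists_tree_simplex (V : Type) [Fintype V] (root : V) (parent : V → V)
    (hroot : parent root = root)
    (hreach : ∀ v : V, ∃ k : ℕ, parent^[k] v = root)
    (a b : ℝ) (ha : 0 < a) (hab : a ≤ b) :
    ∃ n : ℕ, 0 < n ∧ ∃ φ : V → EuclideanSpace ℝ (Fin n),
      Function.Injective φ ∧
      (∀ u v : V, u ≠ v → u ≠ root → v ≠ root → parent u = parent v →
        dist (φ u) (φ v) = a) ∧
      (∀ u v : V, u ≠ v → (∃ k : ℕ, parent^[k] v = u) → dist (φ u) (φ v) = b) ∧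
      AffineIndependent ℝ φ := by
  classical
  have hb : 0 < b := lt_of_lt_of_le ha hab
  set α : ℝ := a / Real.sqrt 2 with hαdef
  set β : ℝ := b / Real.sqrt 2 with hβdef
  set γ : ℝ := Real.sqrt ((b ^ 2 - a ^ 2) / 2) with hγdef
  have h2 : (0:ℝ) < Real.sqrt 2 := by positivity
  have hsq2 : (Real.sqrt 2) ^ 2 = 2 := Real.sq_sqrt (by norm_num)
  have hα2 : α ^ 2 = a ^ 2 / 2 := by
    rw [hαdef, div_pow, hsq2]
  have hβ2 : β ^ 2 = b ^ 2 / 2 := by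
    rw [hβdef, div_pow, hsq2]
  have hγ2 : γ ^ 2 = (b ^ 2 - a ^ 2) / 2 := Real.sq_sqrt (by nlinarith)
  -- index set
  set ι := Sum V (Sum V Unit) with hιdef
  set n := Fintype.card ι with hndef
  have hn : 0 < n := Fintype.card_pos
  set e : ι ≃ Fin n := Fintype.equivFin ι with hedef
  -- the raw coordinates
  set g : V → ι → ℝ := fun v => Sum.elim (fun w => if w = v then α else 0)
      (Sum.elim (fun w => if w = parent v then γ else 0) (fun _ => β)) with hgdef
  set ψ : V → EuclideanSpace ℝ (Fin n) := fun v =>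
    if v = root then 0 else WithLp.toLp 2 (fun j => g v (e.symm j)) with hψdef
  have hψroot : ψ root = 0 := if_pos rfl
  -- iterated parent of root is root
  have hfix : ∀ k : ℕ, parent^[k] root = root := fun k => Function.iterate_fixed hroot k
  -- ancestors are not siblings
  have hanc : ∀ u v : V, u ≠ root → v ≠ root → u ≠ v →
      (∃ k : ℕ, parent^[k] v = u) → parent u ≠ parent v := by
    rintro u v hu hv huv ⟨k, hk⟩ hpe
    rcases k with _ | k'
    · exact huv hk.symm
    · set w := parent v with hw
      have h1 : parent^[k'] w = u := by
        rw [hw, ← Function.iterate_succ_apply, hk]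
      have h2 : parent^[k' + 1] w = w := by
        rw [Function.iterate_succ_apply', h1, hpe, hw]
      have hmul : ∀ m : ℕ, parent^[m * (k' + 1)] w = w := by
        intro m
        induction m with
        | zero => simp
        | succ m ih =>
          rw [Nat.succ_mul, Function.iterate_add_apply, h2, ih]
      obtain ⟨N, hN⟩ := hreach w
      have hwroot : w = root := by
        have h3 : parent^[N * (k' + 1)] w = w := hmul N
        have h4 : N * (k' + 1) = N * k' + N := by ring
        rw [h4, Function.iterate_add_apply, hN, hfix] at h3
        exact h3.symm
      have : u = root := by
        rw [← h1, hwroot, hfix]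
      exact hu this
  -- distance computations
  have hsum : ∀ u v : V, u ≠ root → v ≠ root → u ≠ v →
      (∑ j : Fin n, (ψ u j - ψ v j) ^ 2) =
        if parent u = parent v then a ^ 2 else b ^ 2 := by
    intro u v hu hv huv
    have h0 : ∀ j : Fin n, (ψ u j - ψ v j) ^ 2 = (g u (e.symm j) - g v (e.symm j)) ^ 2 := by
      intro j
      rw [hψdef]
      simp only [if_neg hu, if_neg hv, PiLp.toLp_apply]
    rw [Finset.sum_congr rfl fun j _ => h0 j]
    rw [Equiv.sum_comp e.symm (fun i => (g u i - g v i) ^ 2)]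
    rw [hgdef]
    rw [Fintype.sum_sum_type, Fintype.sum_sum_type]
    simp only [Sum.elim_inl, Sum.elim_inr]
    have hA : (∑ w : V, ((if w = u then α else 0) - (if w = v then α else 0)) ^ 2)
        = α ^ 2 + α ^ 2 := by
      have hterm : ∀ w : V, ((if w = u then α else 0) - (if w = v then α else 0)) ^ 2
          = (if w = u then α ^ 2 else 0) + (if w = v then α ^ 2 else 0) := by
        intro w
        by_cases h1 : w = u <;> by_cases h2 : w = v
        · exact absurd (h1 ▸ h2) huv
        · simp [h1, h2, huv, Ne.symm huv]
        · simp [h1, h2, huv, Ne.symm huv]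
        · simp [h1, h2]
      rw [Finset.sum_congr rfl fun w _ => hterm w, Finset.sum_add_distrib]
      simp
    have hC : (∑ x : Unit, (β - β) ^ 2) = 0 := by simp
    rw [hA, hC]
    by_cases hpe : parent u = parent v
    · rw [if_pos hpe]
      have : (∑ w : V, ((if w = parent u then γ else 0) - (if w = parent v then γ else 0)) ^ 2)
          = 0 := by
        rw [hpe]; simp
      rw [this]
      rw [hα2]; ring
    · rw [if_neg hpe]
      have hB : (∑ w : V, ((if w = parent u then γ else 0) - (if w = parent v then γ else 0)) ^ 2)
          = γ ^ 2 + γ ^ 2 := by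
        have hterm : ∀ w : V, ((if w = parent u then γ else 0) - (if w = parent v then γ else 0)) ^ 2
            = (if w = parent u then γ ^ 2 else 0) + (if w = parent v then γ ^ 2 else 0) := by
          intro w
          by_cases h1 : w = parent u <;> by_cases h2 : w = parent v
          · exact absurd (h1 ▸ h2) hpe
          · simp [h1, h2, hpe, Ne.symm hpe]
          · simp [h1, h2, hpe, Ne.symm hpe]
          · simp [h1, h2]
        rw [Finset.sum_congr rfl fun w _ => hterm w, Finset.sum_add_distrib]
        simp
      rw [hB, hα2, hγ2]; ring
  have hdist : ∀ u v : V, u ≠ root → v ≠ root → u ≠ v →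
      dist (ψ u) (ψ v) = if parent u = parent v then a else b := by
    intro u v hu hv huv
    rw [EuclideanSpace.dist_eq]
    have : ∀ j : Fin n, dist (ψ u j) (ψ v j) ^ 2 = (ψ u j - ψ v j) ^ 2 := by
      intro j; rw [Real.dist_eq, sq_abs]
    rw [Finset.sum_congr rfl fun j _ => this j, hsum u v hu hv huv]
    by_cases hpe : parent u = parent v
    · rw [if_pos hpe, if_pos hpe, Real.sqrt_sq ha.le]
    · rw [if_neg hpe, if_neg hpe, Real.sqrt_sq hb.le]
  have hrootdist : ∀ v : V, v ≠ root → dist (ψ root) (ψ v) = b := by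
    intro v hv
    rw [EuclideanSpace.dist_eq]
    have h0 : ∀ j : Fin n, dist (ψ root j) (ψ v j) ^ 2 = (g v (e.symm j)) ^ 2 := by
      intro j
      rw [hψroot]
      have hv' : ψ v j = g v (e.symm j) := by rw [hψdef]; simp only [if_neg hv, PiLp.toLp_apply]
      rw [hv', Real.dist_eq, PiLp.zero_apply, sq_abs]
      ring
    rw [Finset.sum_congr rfl fun j _ => h0 j]
    rw [Equiv.sum_comp e.symm (fun i => (g v i) ^ 2)]
    rw [hgdef]
    rw [Fintype.sum_sum_type, Fintype.sum_sum_type]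
    simp only [Sum.elim_inl, Sum.elim_inr]
    have hA : (∑ w : V, (if w = v then α else 0) ^ 2) = α ^ 2 := by
      have : ∀ w : V, (if w = v then α else 0) ^ 2 = (if w = v then α ^ 2 else 0) := by
        intro w; by_cases h : w = v <;> simp [h]
      rw [Finset.sum_congr rfl fun w _ => this w]; simp
    have hB : (∑ w : V, (if w = parent v then γ else 0) ^ 2) = γ ^ 2 := by
      have : ∀ w : V, (if w = parent v then γ else 0) ^ 2 = (if w = parent v then γ ^ 2 else 0) := by
        intro w; by_cases h : w = parent v <;> simp [h]
      rw [Finset.sum_congr rfl fun w _ => this w]; simp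
    have hC : (∑ x : Unit, β ^ 2) = β ^ 2 := by simp
    rw [hA, hB, hC, hα2, hβ2, hγ2]
    have : a ^ 2 / 2 + ((b ^ 2 - a ^ 2) / 2 + b ^ 2 / 2) = b ^ 2 := by ring
    rw [this, Real.sqrt_sq hb.le]
  -- general positivity of distances
  have hpos : ∀ u v : V, u ≠ v → dist (ψ u) (ψ v) ≠ 0 := by
    intro u v huv
    by_cases hu : u = root
    · subst hu
      rw [hrootdist v (fun h => absurd h.symm huv)]
      exact hb.ne'
    · by_cases hv : v = root
      · subst hv
        rw [dist_comm, hrootdist u hu]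
        exact hb.ne'
      · rw [hdist u v hu hv huv]
        by_cases hpe : parent u = parent v
        · rw [if_pos hpe]; exact ha.ne'
        · rw [if_neg hpe]; exact hb.ne'
  refine ⟨n, hn, ψ, ?_, ?_, ?_, ?_⟩
  · intro u v h
    by_contra huv
    exact hpos u v huv (by rw [h, dist_self])
  · intro u v huv hu hv hpe
    rw [hdist u v hu hv huv, if_pos hpe]
  · rintro u v huv ⟨k, hk⟩
    have hv : v ≠ root := by
      rintro rfl
      exact huv ((hfix k ▸ hk).symm)
    by_cases hu : u = root
    · subst hu; exact hrootdist v hv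
    · rw [hdist u v hu hv huv, if_neg (hanc u v hu hv huv ⟨k, hk⟩)]
  · rw [affineIndependent_iff_linearIndependent_vsub ℝ ψ root]
    have heq : (fun v : {x : V // x ≠ root} => ψ v -ᵥ ψ root)
        = fun v : {x : V // x ≠ root} => ψ v := by
      funext v
      rw [hψroot, vsub_eq_sub, sub_zero]
    rw [heq]
    -- project to the first block of coordinates
    set F : EuclideanSpace ℝ (Fin n) →ₗ[ℝ] (V → ℝ) :=
      { toFun := fun x w => x (e (Sum.inl w))
        map_add' := fun x y => rfl
        map_smul' := fun c x => rfl } with hFdef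
    apply LinearIndependent.of_comp F
    have hFψ : (F ∘ fun v : {x : V // x ≠ root} => ψ v)
        = fun v : {x : V // x ≠ root} => Pi.single (v : V) α := by
      funext v
      rw [hFdef]
      simp only [Function.comp_apply, LinearMap.coe_mk, AddHom.coe_mk]
      funext w
      rw [hψdef]
      simp only [if_neg v.2]
      change g (v : V) (e.symm (e (Sum.inl w))) = _
      rw [Equiv.symm_apply_apply, hgdef]
      simp only [Sum.elim_inl]
      rw [Pi.single_apply]
    rw [hFψ]
    have hα0 : α ≠ 0 := by positivity
    have hbase : LinearIndependent ℝ (fun v : {x : V // x ≠ root} => (Pi.single (v : V) (1:ℝ) : V → ℝ)) := by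
      have := (Pi.basisFun ℝ V).linearIndependent
      have h2 := this.comp (fun v : {x : V // x ≠ root} => (v : V)) Subtype.val_injective
      convert h2 using 1
      funext v; simp [Pi.basisFun_apply]
    have := hbase.units_smul (fun _ => Units.mk0 α hα0)
    convert this using 1
    funext v
    show Pi.single (v : V) α = (Units.mk0 α hα0 : ℝ) • (Pi.single (v : V) (1:ℝ) : V → ℝ)
    rw [← Pi.single_smul]
    simp
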